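/- Bott's formula on projective space: for integers n ≥ 1, 0 ≤ p ≤ n, and k > p, the dimension of H⁰(ℙⁿ, Ω^p(k)) equals binomial(k+n-p, k) · binomial(k-1, p); moreover h⁰(ℙⁿ, Ω^p(k)) = 0 whenever k ≤ p and (k,p) ≠ (0,0). -/

import Mathlib

/-!
STATEMENT 4. Bott's formula on projective space: for `n ≥ 1`, `0 ≤ p ≤ n` and `k > p`,
`h⁰(ℙⁿ, Ω^p(k)) = C(k+n-p, k) · C(k-1, p)`; moreover `h⁰(ℙⁿ, Ω^p(k)) = 0` whenever
`k ≤ p` and `(k, p) ≠ (0, 0)`.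

Concrete model.  By the (exact) Euler/Koszul complex on `ℙⁿ`,
`H⁰(ℙⁿ, Ω^p(k))` is canonically isomorphic to the kernel of the contraction with the
Euler vector field
  `δ : ⋀^p V^* ⊗ S_{k-p} → ⋀^{p-1} V^* ⊗ S_{k-p+1}`,
where `V = ℂ^{n+1}`, `S_m` is the space of homogeneous polynomials of degree `m` in the
variables `x_0, …, x_n` (zero for `m < 0`), and on a basis element indexed by a subset
`s` with `|s| = p` of the variables,
  `(δω)_t = ∑_{i ∉ t} (-1)^{#{j ∈ t : j < i}} · x_i · ω_{t ∪ {i}}` for `|t| = p - 1`.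
We formalize `H⁰(ℙⁿ, Ω^p(k))` as this kernel (intersected with the homogeneity
conditions), a subspace of the space of functions from `p`-element subsets of
`Fin (n+1)` to `MvPolynomial (Fin (n+1)) ℂ`. -/

open MvPolynomial

/-- Homogeneous polynomials of (integer) degree `d`; zero if `d < 0`. -/
noncomputable def homDeg (n : ℕ) (d : ℤ) :
    Submodule ℂ (MvPolynomial (Fin (n + 1)) ℂ) :=
  if 0 ≤ d then MvPolynomial.homogeneousSubmodule (Fin (n + 1)) ℂ d.toNat else ⊥

/-- The `t`-component of the contraction with the Euler vector field,
on `p`-forms with polynomial coefficients (here `t` is a subset with `|t| + 1 = p`). -/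
noncomputable def eulerContract (n p : ℕ) (t : Finset (Fin (n + 1))) (ht : t.card + 1 = p) :
    ({s : Finset (Fin (n + 1)) // s.card = p} → MvPolynomial (Fin (n + 1)) ℂ) →ₗ[ℂ]
      MvPolynomial (Fin (n + 1)) ℂ :=
  ∑ i ∈ tᶜ.attach,
    ((-1 : ℂ) ^ (t.filter (fun j => j < i.1)).card) •
      ((LinearMap.mulLeft ℂ (MvPolynomial.X i.1 : MvPolynomial (Fin (n + 1)) ℂ)).comp
        (LinearMap.proj (⟨insert i.1 t, by
          rw [Finset.card_insert_of_notMem (Finset.mem_compl.mp i.2), ht]⟩ :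
            {s : Finset (Fin (n + 1)) // s.card = p})))

/-- The model for `H⁰(ℙⁿ, Ω^p(k))`: `p`-forms whose coefficients are homogeneous
polynomials of degree `k - p` and which are killed by contraction with the Euler
vector field. -/
noncomputable def H0Omega (n p : ℕ) (k : ℤ) :
    Submodule ℂ ({s : Finset (Fin (n + 1)) // s.card = p} → MvPolynomial (Fin (n + 1)) ℂ) :=
  (Submodule.pi Set.univ (fun _ => homDeg n (k - p))) ⊓
    ⨅ (t : Finset (Fin (n + 1))) (ht : t.card + 1 = p),
      LinearMap.ker (eulerContract n p t ht)

set_option maxHeartbeats 1000000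
set_option synthInstance.maxHeartbeats 400000

-- ## Auxiliary setup

namespace Bott

abbrev Idx (n p : ℕ) := {s : Finset (Fin (n + 1)) // s.card = p}

abbrev A (n p : ℕ) := Idx n p → MvPolynomial (Fin (n + 1)) ℂ

/-- The sign `(-1)^{#{j ∈ t : j < i}}`. -/
noncomputable def sg {α : Type*} [LinearOrder α] (t : Finset α) (i : α) : ℂ :=
  (-1) ^ (t.filter (fun j => j < i)).card

lemma sg_mul_self {α : Type*} [LinearOrder α] (t : Finset α) (i : α) : sg t i * sg t i = 1 := by
  rw [sg, ← pow_add, ← two_mul, pow_mul]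
  norm_num

lemma sg_ne_zero {α : Type*} [LinearOrder α] (t : Finset α) (i : α) : sg t i ≠ 0 := by
  intro h
  have := sg_mul_self t i
  rw [h, mul_zero] at this
  exact one_ne_zero this.symm

lemma sg_insert {m : ℕ} {t : Finset (Fin m)} {a : Fin m} (ha : a ∉ t) (i : Fin m) :
    sg (insert a t) i = (if a < i then -1 else 1) * sg t i := by
  rw [sg, sg, Finset.filter_insert]
  split_ifs with h
  · rw [Finset.card_insert_of_notMem (fun hc => ha (Finset.mem_of_mem_filter a hc))]
    rw [pow_succ, mul_comm]
  · ring

lemma sg_insert_self {m : ℕ} (t : Finset (Fin m)) (a : Fin m) :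
    sg (insert a t) a = sg t a := by
  rw [sg, sg, Finset.filter_insert, if_neg (lt_irrefl a)]

lemma sg_erase_self {m : ℕ} (t : Finset (Fin m)) (a : Fin m) :
    sg (t.erase a) a = sg t a := by
  by_cases h : a ∈ t
  · conv_rhs => rw [← Finset.insert_erase h]
    rw [sg_insert_self]
  · rw [Finset.erase_eq_of_notMem h]

/-- Extend a `p`-form to arbitrary finsets by zero. -/
noncomputable def ext0 {n : ℕ} (p : ℕ) (ω : A n p) (s : Finset (Fin (n + 1))) :
    MvPolynomial (Fin (n + 1)) ℂ :=
  if h : s.card = p then ω ⟨s, h⟩ else 0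

lemma ext0_eq {n : ℕ} {p : ℕ} (ω : A n p) {s : Finset (Fin (n + 1))} (h : s.card = p) :
    ext0 p ω s = ω ⟨s, h⟩ := dif_pos h

lemma eulerContract_apply {n p : ℕ} (t : Finset (Fin (n + 1))) (ht : t.card + 1 = p)
    (ω : A n p) :
    eulerContract n p t ht ω = ∑ i ∈ tᶜ, sg t i • (X i * ext0 p ω (insert i t)) := by
  rw [eulerContract]
  rw [LinearMap.coe_sum, Finset.sum_apply]
  rw [← Finset.sum_attach tᶜ (fun i => sg t i • (X i * ext0 p ω (insert i t)))]
  refine Finset.sum_congr rfl fun i _ => ?_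
  have hi : i.1 ∉ t := Finset.mem_compl.mp i.2
  rw [LinearMap.smul_apply, LinearMap.comp_apply, LinearMap.mulLeft_apply, LinearMap.proj_apply,
    sg, ext0_eq ω (by rw [Finset.card_insert_of_notMem hi, ht])]


/-- The assembled contraction `Δ : A (p+1) → A p`. -/
noncomputable def Delta (n p : ℕ) : A n (p + 1) →ₗ[ℂ] A n p :=
  LinearMap.pi (fun s : Idx n p => eulerContract n (p + 1) s.1 (by rw [s.2]))

lemma Delta_apply {n p : ℕ} (ω : A n (p + 1)) (s : Idx n p) :
    Delta n p ω s = ∑ i ∈ s.1ᶜ, sg s.1 i • (X i * ext0 (p + 1) ω (insert i s.1)) := by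
  rw [Delta, LinearMap.pi_apply, eulerContract_apply]

lemma mem_H0Omega {n p : ℕ} {k : ℤ} (ω : A n p) :
    ω ∈ H0Omega n p k ↔ (∀ s : Idx n p, ω s ∈ homDeg n (k - p)) ∧
      ∀ (t : Finset (Fin (n + 1))) (ht : t.card + 1 = p), eulerContract n p t ht ω = 0 := by
  simp [H0Omega, Submodule.mem_pi, Submodule.mem_iInf, LinearMap.mem_ker]

lemma ext0_Delta {n p : ℕ} (ω : A n (p + 1)) {s : Finset (Fin (n + 1))} (hs : s.card = p) :
    ext0 p (Delta n p ω) s = ∑ i ∈ sᶜ, sg s i • (X i * ext0 (p + 1) ω (insert i s)) := by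
  rw [ext0_eq _ hs, Delta_apply]

/-- Generic cancellation of an antisymmetric double sum. -/
lemma sum_erase_antisymm {α : Type*} [DecidableEq α] {M : Type*} [AddCommGroup M] [Module ℂ M]
    {s : Finset α} {g : α → α → M}
    (h : ∀ i ∈ s, ∀ j ∈ s, i ≠ j → g i j = -g j i) :
    ∑ i ∈ s, ∑ j ∈ s.erase i, g i j = 0 := by
  classical
  have key : ∀ i ∈ s, ∑ j ∈ s.erase i, g i j = ∑ j ∈ s, if j ≠ i then g i j else 0 := by
    intro i _
    rw [← Finset.filter_ne' s i, Finset.sum_filter]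
  set S := ∑ i ∈ s, ∑ j ∈ s.erase i, g i j with hS
  have h1 : S = ∑ i ∈ s, ∑ j ∈ s, (if j ≠ i then g i j else 0) :=
    Finset.sum_congr rfl key
  have hG : ∀ i ∈ s, ∀ j ∈ s, (if j ≠ i then g i j else 0) = -(if i ≠ j then g j i else 0) := by
    intro i hi j hj
    by_cases hij : i = j
    · subst hij; simp
    · rw [if_pos (Ne.symm hij), if_pos hij, h i hi j hj hij]
  have h2 : S = -S := by
    nth_rewrite 1 [h1]
    rw [Finset.sum_congr rfl (fun i hi => Finset.sum_congr rfl (fun j hj => hG i hi j hj))]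
    simp only [Finset.sum_neg_distrib]
    rw [Finset.sum_comm, ← h1]
  have h3 : (2 : ℂ) • S = 0 := by
    rw [two_smul]
    nth_rewrite 1 [h2]
    abel
  exact (smul_eq_zero.mp h3).resolve_left (by norm_num)

/-- `Δ ∘ Δ = 0`, componentwise. -/
lemma delta_delta {n p : ℕ} (ω : A n (p + 2)) (t : Finset (Fin (n + 1)))
    (ht : t.card + 1 = p + 1) :
    eulerContract n (p + 1) t ht (Delta n (p + 1) ω) = 0 := by
  rw [eulerContract_apply]
  have step : ∀ i ∈ tᶜ, sg t i • (X i * ext0 (p + 1) (Delta n (p + 1) ω) (insert i t)) =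
      ∑ j ∈ tᶜ.erase i, (sg t i * sg (insert i t) j) •
        (X i * X j * ext0 (p + 2) ω (insert j (insert i t))) := by
    intro i hi
    have hit : i ∉ t := Finset.mem_compl.mp hi
    rw [ext0_Delta ω (by rw [Finset.card_insert_of_notMem hit]; omega)]
    rw [Finset.mul_sum, Finset.smul_sum, Finset.compl_insert]
    refine Finset.sum_congr rfl fun j hj => ?_
    rw [mul_smul_comm, smul_smul, mul_assoc]
  rw [Finset.sum_congr rfl step]
  refine sum_erase_antisymm fun i hi j hj hij => ?_
  have hit : i ∉ t := Finset.mem_compl.mp hi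
  have hjt : j ∉ t := Finset.mem_compl.mp hj
  rw [Finset.insert_comm]
  have h1 : sg (insert i t) j = (if i < j then -1 else 1) * sg t j := sg_insert hit j
  have h2 : sg (insert j t) i = (if j < i then -1 else 1) * sg t i := sg_insert hjt i
  rw [h1, h2]
  have : X (R := ℂ) i * X j = X j * X i := mul_comm _ _
  rw [this]
  rcases lt_or_gt_of_ne hij with h | h
  · rw [if_pos h, if_neg (asymm h)]
    rw [← neg_smul]
    ring_nf
  · rw [if_neg (asymm h), if_pos h]
    rw [← neg_smul]
    ring_nf


lemma degree_sub_single {N : ℕ} (σ : Fin N →₀ ℕ) (i : Fin N) (h : σ i ≠ 0) :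
    (σ - Finsupp.single i 1).degree + 1 = σ.degree := by
  have hs : (σ - Finsupp.single i 1) + Finsupp.single i 1 = σ := by
    ext j
    simp only [Finsupp.add_apply, Finsupp.tsub_apply, Finsupp.single_apply]
    by_cases hji : i = j
    · subst hji; simp; omega
    · simp [hji]
  have hone : (Finsupp.single i 1).degree = 1 := by
    exact Finsupp.degree_single i 1
  calc (σ - Finsupp.single i 1).degree + 1
      = (σ - Finsupp.single i 1).degree + (Finsupp.single i 1).degree := by rw [hone]
    _ = σ.degree := by
        simp only [Finsupp.degree_eq_weight_one] at *
        rw [← map_add, hs]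

lemma sum_eq_degree {N : ℕ} (σ : Fin N →₀ ℕ) : ∑ i : Fin N, σ i = σ.degree := by
  rw [Finsupp.degree]
  exact (Finset.sum_subset (Finset.subset_univ _)
    (fun x _ hx => Finsupp.notMem_support_iff.mp hx)).symm

lemma X_mul_pderiv_monomial {N : ℕ} (σ : Fin N →₀ ℕ) (c : ℂ) (i : Fin N) :
    X i * pderiv i (monomial σ c) = monomial σ ((σ i : ℂ) * c) := by
  rw [pderiv_monomial]
  by_cases h : σ i = 0
  · simp [h]
  · rw [X, monomial_mul]
    have : Finsupp.single i 1 + (σ - Finsupp.single i 1) = σ := by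
      ext j
      simp only [Finsupp.add_apply, Finsupp.tsub_apply, Finsupp.single_apply]
      by_cases hji : i = j
      · subst hji; simp; omega
      · simp [hji]
    rw [this]
    ring_nf

lemma euler_identity {N : ℕ} {f : MvPolynomial (Fin N) ℂ} {m : ℕ} (hf : f.IsHomogeneous m) :
    ∑ i : Fin N, X i * pderiv i f = (m : ℂ) • f := by
  have h1 : ∑ i : Fin N, X i * pderiv i f
      = ∑ i : Fin N, ∑ σ ∈ f.support, X i * pderiv i (monomial σ (coeff σ f)) := by
    refine Finset.sum_congr rfl fun i _ => ?_
    conv_lhs => rw [as_sum f]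
    rw [map_sum, Finset.mul_sum]
  rw [h1, Finset.sum_comm]
  have h2 : ∀ σ ∈ f.support, ∑ i : Fin N, X i * pderiv i (monomial σ (coeff σ f))
      = monomial σ ((m : ℂ) * coeff σ f) := by
    intro σ hσ
    have hdeg : σ.degree = m := by
      have := hf (MvPolynomial.mem_support_iff.mp hσ)
      rw [Finsupp.degree_eq_weight_one]; exact this
    calc ∑ i : Fin N, X i * pderiv i (monomial σ (coeff σ f))
        = ∑ i : Fin N, monomial σ ((σ i : ℂ) * coeff σ f) :=
          Finset.sum_congr rfl fun i _ => X_mul_pderiv_monomial σ _ i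
      _ = monomial σ ((∑ i : Fin N, (σ i : ℂ)) * coeff σ f) := by
          rw [← map_sum, ← Finset.sum_mul]
      _ = monomial σ ((m : ℂ) * coeff σ f) := by
          norm_cast
          rw [sum_eq_degree, hdeg]
  rw [Finset.sum_congr rfl h2]
  conv_rhs => rw [as_sum f]
  rw [Finset.smul_sum]
  refine Finset.sum_congr rfl fun σ _ => ?_
  rw [smul_monomial, smul_eq_mul]

lemma pderiv_isHomogeneous {N : ℕ} {f : MvPolynomial (Fin N) ℂ} {m : ℕ}
    (hf : f.IsHomogeneous m) (i : Fin N) : (pderiv i f).IsHomogeneous (m - 1) := by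
  have h : pderiv i f = ∑ σ ∈ f.support, pderiv i (monomial σ (coeff σ f)) := by
    conv_lhs => rw [as_sum f]
    rw [map_sum]
  rw [h]
  refine MvPolynomial.IsHomogeneous.sum _ _ _ fun σ hσ => ?_
  rw [pderiv_monomial]
  by_cases hz : σ i = 0
  · simp only [hz, Nat.cast_zero, mul_zero, map_zero]
    exact isHomogeneous_zero _ _ _
  · refine isHomogeneous_monomial _ ?_
    have hdeg : σ.degree = m := by
      have := hf (MvPolynomial.mem_support_iff.mp hσ)
      rw [Finsupp.degree_eq_weight_one]; exact this
    have := degree_sub_single σ i hz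
    omega

/-- The "de Rham"-type contracting homotopy. -/
noncomputable def Dform {n : ℕ} (p : ℕ) (ω : A n p) : A n (p + 1) :=
  fun s => ∑ i ∈ s.1, sg s.1 i • pderiv i (ext0 p ω (s.1.erase i))

lemma ext0_Dform {n p : ℕ} (ω : A n p) {u : Finset (Fin (n + 1))} (hu : u.card = p + 1) :
    ext0 (p + 1) (Dform p ω) u = ∑ j ∈ u, sg u j • pderiv j (ext0 p ω (u.erase j)) := by
  rw [ext0_eq _ hu]
  rfl

lemma delta_Dform {n p m : ℕ} (ω : A n p)
    (hom : ∀ s : Idx n p, (ω s).IsHomogeneous m)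
    (hcl : ∀ (t : Finset (Fin (n + 1))) (ht : t.card + 1 = p), eulerContract n p t ht ω = 0)
    (s : Idx n p) :
    Delta n p (Dform p ω) s = ((m : ℂ) + (p : ℂ)) • ω s := by
  rw [Delta_apply]
  have hωs : ext0 p ω s.1 = ω s := ext0_eq ω s.2
  have expand : ∀ i ∈ s.1ᶜ,
      sg s.1 i • (X i * ext0 (p + 1) (Dform p ω) (insert i s.1)) =
      (X i * pderiv i (ω s)) + ∑ j ∈ s.1, (sg s.1 i * sg (insert i s.1) j) •
        (X i * pderiv j (ext0 p ω (insert i (s.1.erase j)))) := by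
    intro i hi
    have his : i ∉ s.1 := Finset.mem_compl.mp hi
    rw [ext0_Dform _ (by rw [Finset.card_insert_of_notMem his, s.2])]
    rw [Finset.sum_insert his, Finset.erase_insert his, sg_insert_self, hωs]
    rw [mul_add, smul_add]
    congr 1
    · rw [mul_smul_comm, smul_smul, sg_mul_self, one_smul]
    · rw [Finset.mul_sum, Finset.smul_sum]
      refine Finset.sum_congr rfl fun j hj => ?_
      have hij : i ≠ j := fun h => his (h ▸ hj)
      rw [mul_smul_comm, smul_smul, Finset.erase_insert_of_ne hij]
  rw [Finset.sum_congr rfl expand, Finset.sum_add_distrib, Finset.sum_comm]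
  have inner_eq : ∀ j ∈ s.1, (∑ i ∈ s.1ᶜ, (sg s.1 i * sg (insert i s.1) j) •
      (X i * pderiv j (ext0 p ω (insert i (s.1.erase j)))))
      = ω s + X j * pderiv j (ω s) := by
    intro j hj
    have hjc : j ∉ s.1ᶜ := by simp [hj]
    have hpos : 0 < p := s.2 ▸ Finset.card_pos.mpr ⟨j, hj⟩
    have hcl' := hcl (s.1.erase j) (by rw [Finset.card_erase_of_mem hj, s.2]; omega)
    rw [eulerContract_apply] at hcl'
    have hD := congrArg (pderiv j) hcl'
    rw [map_sum, map_zero, Finset.compl_erase, Finset.sum_insert hjc] at hD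
    -- the `i = j` term of hD
    have hjterm : pderiv j (sg (s.1.erase j) j • (X j * ext0 p ω (insert j (s.1.erase j))))
        = sg s.1 j • (ω s + X j * pderiv j (ω s)) := by
      rw [Finset.insert_erase hj, hωs, Derivation.map_smul, sg_erase_self]
      congr 1
      rw [pderiv_mul, pderiv_X_self, one_mul]
    rw [hjterm] at hD
    have hBterm : ∀ i ∈ s.1ᶜ, pderiv j (sg (s.1.erase j) i • (X i * ext0 p ω (insert i (s.1.erase j))))
        = sg (s.1.erase j) i • (X i * pderiv j (ext0 p ω (insert i (s.1.erase j)))) := by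
      intro i hi
      have hij : i ≠ j := fun h => (Finset.mem_compl.mp hi) (h ▸ hj)
      rw [Derivation.map_smul, pderiv_mul, pderiv_X_of_ne hij, zero_mul, zero_add]
    rw [Finset.sum_congr rfl hBterm] at hD
    -- rewrite coefficients in the goal
    have hcoef : ∀ i ∈ s.1ᶜ, (sg s.1 i * sg (insert i s.1) j) •
        (X i * pderiv j (ext0 p ω (insert i (s.1.erase j))))
        = (-sg s.1 j) • (sg (s.1.erase j) i • (X i * pderiv j (ext0 p ω (insert i (s.1.erase j))))) := by
      intro i hi
      have his : i ∉ s.1 := Finset.mem_compl.mp hi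
      have hij : i ≠ j := fun h => his (h ▸ hj)
      have hje : j ∉ s.1.erase j := Finset.notMem_erase j s.1
      have e1 : sg (insert i s.1) j = (if i < j then -1 else 1) * sg s.1 j := sg_insert his j
      have e2 : sg s.1 i = (if j < i then -1 else 1) * sg (s.1.erase j) i := by
        conv_lhs => rw [← Finset.insert_erase hj]
        exact sg_insert hje i
      rw [smul_smul, e1, e2]
      congr 1
      rcases lt_or_gt_of_ne hij with h | h
      · rw [if_pos h, if_neg (asymm h)]; ring
      · rw [if_neg (asymm h), if_pos h]; ring
    rw [Finset.sum_congr rfl hcoef, ← Finset.smul_sum]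
    have hB : ∑ i ∈ s.1ᶜ, sg (s.1.erase j) i • (X i * pderiv j (ext0 p ω (insert i (s.1.erase j))))
        = -(sg s.1 j • (ω s + X j * pderiv j (ω s))) := by
      linear_combination (norm := module) hD
    rw [hB, smul_neg, neg_smul, neg_neg, smul_smul, sg_mul_self, one_smul]
  rw [Finset.sum_congr rfl inner_eq]
  rw [Finset.sum_add_distrib, Finset.sum_const, s.2]
  have htot : ∑ i ∈ s.1ᶜ, X i * pderiv i (ω s) + ∑ j ∈ s.1, X j * pderiv j (ω s)
      = (m : ℂ) • ω s := by
    rw [add_comm (∑ i ∈ (s.1)ᶜ, X i * pderiv i (ω s)), Finset.sum_add_sum_compl]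
    exact euler_identity (hom s)
  have hfin : ((m : ℂ) + (p : ℂ)) • ω s = (m : ℂ) • ω s + p • ω s := by
    rw [add_smul]
    congr 1
    exact Nat.cast_smul_eq_nsmul ℂ p (ω s)
  rw [hfin, ← htot]
  abel


open Module

/-- A `Submodule.pi` over `univ` of copies of a submodule is equivalent to a pi type. -/
noncomputable def piSubEquiv {ι : Type*} {M : Type*} [AddCommGroup M] [Module ℂ M]
    (W : Submodule ℂ M) :
    ↥(Submodule.pi (Set.univ : Set ι) fun _ => W) ≃ₗ[ℂ] (ι → W) where
  toFun x i := ⟨x.1 i, x.2 i (Set.mem_univ i)⟩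
  map_add' x y := rfl
  map_smul' c x := rfl
  invFun v := ⟨fun i => v i, fun i _ => (v i).2⟩
  left_inv x := rfl
  right_inv v := rfl

lemma finrank_piSub {ι : Type*} [Fintype ι] {M : Type*} [AddCommGroup M] [Module ℂ M]
    (W : Submodule ℂ M) [FiniteDimensional ℂ W] :
    finrank ℂ ↥(Submodule.pi (Set.univ : Set ι) fun _ => W)
      = Fintype.card ι * finrank ℂ W := by
  rw [(piSubEquiv W).finrank_eq, Module.finrank_pi_fintype, Finset.sum_const,
    Finset.card_univ, smul_eq_mul]

instance finiteDimensional_piSub {ι : Type*} [Fintype ι] {M : Type*} [AddCommGroup M]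
    [Module ℂ M] (W : Submodule ℂ M) [FiniteDimensional ℂ W] :
    FiniteDimensional ℂ ↥(Submodule.pi (Set.univ : Set ι) fun _ => W) :=
  LinearEquiv.finiteDimensional (piSubEquiv W).symm

/-- Monomial exponents of degree `m` correspond to `Sym` elements. -/
noncomputable def symEquiv (n m : ℕ) :
    ↥{d : Fin (n + 1) →₀ ℕ | d.degree = m} ≃ Sym (Fin (n + 1)) m :=
  Equiv.subtypeEquiv (Multiset.toFinsupp (α := Fin (n + 1))).symm.toEquiv (by
    intro d
    have hc : Multiset.card ((Multiset.toFinsupp (α := Fin (n + 1))).symm.toEquiv d)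
        = d.degree := by
      rw [show ((Multiset.toFinsupp (α := Fin (n + 1))).symm.toEquiv d)
        = Finsupp.toMultiset d from rfl, Finsupp.card_toMultiset]
      rfl
    show d.degree = m ↔ _
    rw [hc])

instance symFinite (n m : ℕ) : Finite ↥{d : Fin (n + 1) →₀ ℕ | d.degree = m} :=
  Finite.of_equiv _ (symEquiv n m).symm

noncomputable instance symFintype (n m : ℕ) : Fintype ↥{d : Fin (n + 1) →₀ ℕ | d.degree = m} :=
  Fintype.ofEquiv _ (symEquiv n m).symm

lemma card_symSet (n m : ℕ) :
    Fintype.card ↥{d : Fin (n + 1) →₀ ℕ | d.degree = m} = (m + n).choose n := by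
  rw [Fintype.card_congr (symEquiv n m), Sym.card_sym_eq_choose, Fintype.card_fin]
  have h1 : n + 1 + m - 1 = m + n := by omega
  rw [h1, ← Nat.choose_symm (Nat.le_add_left n m), Nat.add_sub_cancel]

noncomputable def homEquiv (n m : ℕ) :
    ↥(homogeneousSubmodule (Fin (n + 1)) ℂ m) ≃ₗ[ℂ]
      (↥{d : Fin (n + 1) →₀ ℕ | d.degree = m} → ℂ) := by
  classical
  refine (LinearEquiv.ofEq _ _ (homogeneousSubmodule_eq_finsupp_supported (Fin (n + 1)) ℂ m)).trans
    ((AddMonoidAlgebra.supportedEquivFinsupp _).trans (Finsupp.linearEquivFunOnFinite ℂ ℂ _))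

instance homFD (n m : ℕ) : FiniteDimensional ℂ ↥(homogeneousSubmodule (Fin (n + 1)) ℂ m) :=
  LinearEquiv.finiteDimensional (homEquiv n m).symm

lemma finrank_homSub (n m : ℕ) :
    finrank ℂ ↥(homogeneousSubmodule (Fin (n + 1)) ℂ m) = (m + n).choose n := by
  rw [(homEquiv n m).finrank_eq, Module.finrank_pi, card_symSet]

lemma homDeg_nonneg {n : ℕ} {d : ℤ} (h : 0 ≤ d) :
    homDeg n d = homogeneousSubmodule (Fin (n + 1)) ℂ d.toNat := if_pos h

lemma homDeg_neg {n : ℕ} {d : ℤ} (h : d < 0) : homDeg n d = ⊥ := if_neg (not_le.mpr h)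

instance homDegFD (n : ℕ) (d : ℤ) : FiniteDimensional ℂ ↥(homDeg n d) := by
  by_cases h : 0 ≤ d
  · rw [homDeg_nonneg h]; infer_instance
  · rw [homDeg_neg (not_le.mp h)]; infer_instance

lemma finrank_homDeg {n : ℕ} {d : ℤ} (h : 0 ≤ d) :
    finrank ℂ ↥(homDeg n d) = (d.toNat + n).choose n := by
  rw [homDeg_nonneg h, finrank_homSub]

lemma card_Idx (n p : ℕ) : Fintype.card (Idx n p) = (n + 1).choose p := by
  rw [Fintype.card_finset_len, Fintype.card_fin]

lemma finrank_P (n p : ℕ) (d : ℤ) (h : 0 ≤ d) :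
    finrank ℂ ↥(Submodule.pi (Set.univ : Set (Idx n p)) fun _ => homDeg n d)
      = (n + 1).choose p * (d.toNat + n).choose n := by
  rw [finrank_piSub, card_Idx, finrank_homDeg h]


open Module

lemma H0_eq_bot {n p : ℕ} {k : ℤ} (hk : k ≤ p) (hne : ¬(k = 0 ∧ p = 0)) :
    H0Omega n p k = ⊥ := by
  rw [eq_bot_iff]
  intro ω hω
  rw [mem_H0Omega] at hω
  obtain ⟨hhom, hcl⟩ := hω
  rw [Submodule.mem_bot]
  rcases lt_or_eq_of_le hk with hlt | heq
  · -- k < p : coefficients live in the zero module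
    funext s
    have hmem := hhom s
    rw [homDeg_neg (by omega), Submodule.mem_bot] at hmem
    simpa using hmem
  · -- k = p ≥ 1
    have hp1 : 1 ≤ p := by
      rcases Nat.eq_zero_or_pos p with h0 | h; · exact absurd ⟨by omega, h0⟩ hne
      exact h
    funext s
    obtain ⟨j, hj⟩ := Finset.card_pos.mp (by rw [s.2]; omega)
    have hcl' := hcl (s.1.erase j)
      (by rw [Finset.card_erase_of_mem hj, s.2]; omega)
    rw [eulerContract_apply] at hcl'
    set t := s.1.erase j with hts
    have hcoeff := congrArg (coeff (Finsupp.single j 1)) hcl'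
    rw [MvPolynomial.coeff_sum, coeff_zero] at hcoeff
    have hterm : ∀ i ∈ tᶜ, coeff (Finsupp.single j 1) (sg t i • (X i * ext0 p ω (insert i t)))
        = if i = j then sg t j * coeff 0 (ext0 p ω (insert j t)) else 0 := by
      intro i hi
      rw [coeff_smul, coeff_X_mul']
      by_cases hij : i = j
      · subst hij
        rw [if_pos (by simp [Finsupp.support_single_ne_zero i one_ne_zero]), if_pos rfl]
        simp
      · have hns : i ∉ (Finsupp.single j 1).support := by
          rw [Finsupp.support_single_ne_zero j one_ne_zero]
          simpa using hij
        rw [if_neg hns, if_neg hij, smul_zero]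
    rw [Finset.sum_congr rfl hterm, Finset.sum_ite_eq' tᶜ j] at hcoeff
    have hjc : j ∈ tᶜ := by simp [hts]
    rw [if_pos hjc] at hcoeff
    have hc0 : coeff 0 (ω s) = 0 := by
      have hins : insert j t = s.1 := by rw [hts, Finset.insert_erase hj]
      rw [hins, ext0_eq ω s.2] at hcoeff
      rcases mul_eq_zero.mp hcoeff with h | h
      · exact absurd h (sg_ne_zero t j)
      · exact h
    -- ω s is homogeneous of degree 0 with zero constant coefficient
    have hhs : (ω s).IsHomogeneous 0 := by
      have := hhom s
      rw [homDeg_nonneg (by omega)] at this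
      rw [mem_homogeneousSubmodule] at this
      have h0 : (k - p).toNat = 0 := by omega
      rwa [h0] at this
    show ω s = 0
    ext d
    by_cases hd : d = 0
    · subst hd; simpa using hc0
    · rw [coeff_zero]
      exact hhs.coeff_eq_zero (fun h => hd ((Finsupp.degree_eq_zero_iff d).mp h))

lemma H0_top_eq_bot {n : ℕ} {k : ℤ} (hk : (n : ℤ) + 1 < k) :
    H0Omega n (n + 1) k = ⊥ := by
  rw [eq_bot_iff]
  intro ω hω
  rw [mem_H0Omega] at hω
  obtain ⟨hhom, hcl⟩ := hω
  rw [Submodule.mem_bot]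
  set m := (k - (n + 1 : ℕ)).toNat with hm
  have hom : ∀ s : Idx n (n + 1), (ω s).IsHomogeneous m := by
    intro s
    have := hhom s
    rwa [homDeg_nonneg (by push_cast; omega), mem_homogeneousSubmodule] at this
  funext s
  show ω s = 0
  have hkey := delta_Dform ω hom hcl s
  have hcompl : (s.1)ᶜ = ∅ := by
    have : s.1 = Finset.univ := Finset.eq_univ_of_card _ (by rw [s.2, Fintype.card_fin])
    rw [this, Finset.compl_univ]
  rw [Delta_apply, hcompl, Finset.sum_empty] at hkey
  have hcast : ((m : ℂ) + ((n + 1 : ℕ) : ℂ)) = (k : ℂ) := by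
    have h1 : ((m : ℤ)) = k - (n + 1 : ℕ) := Int.toNat_of_nonneg (by push_cast; omega)
    have h2 := congrArg (Int.cast : ℤ → ℂ) h1
    push_cast at h2 ⊢
    linear_combination h2
  rw [hcast] at hkey
  have hk0 : (k : ℂ) ≠ 0 := by
    rw [Int.cast_ne_zero]; omega
  have hz := hkey.symm
  rw [smul_eq_zero] at hz
  exact hz.resolve_left hk0

lemma rank_rec {n p : ℕ} {k : ℤ} (hpk : (p : ℤ) < k) :
    finrank ℂ ↥(Submodule.pi (Set.univ : Set (Idx n (p + 1))) fun _ => homDeg n (k - (p + 1 : ℕ)))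
      = finrank ℂ ↥(H0Omega n p k) + finrank ℂ ↥(H0Omega n (p + 1) k) := by
  set P := Submodule.pi (Set.univ : Set (Idx n (p + 1))) fun _ => homDeg n (k - (p + 1 : ℕ))
    with hP
  have hd1 : (0 : ℤ) ≤ k - (p + 1 : ℕ) := by push_cast; omega
  -- Δ maps P into H⁰(Ωᵖ(k))
  have hPmap : ∀ ω ∈ P, Delta n p ω ∈ H0Omega n p k := by
    intro ω hωP
    rw [hP, Submodule.mem_pi] at hωP
    rw [mem_H0Omega]
    constructor
    · intro s
      rw [Delta_apply, homDeg_nonneg (by omega)]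
      refine Submodule.sum_mem _ fun i hi => Submodule.smul_mem _ _ ?_
      rw [mem_homogeneousSubmodule]
      have his : i ∉ s.1 := Finset.mem_compl.mp hi
      have hmem := hωP ⟨insert i s.1, by rw [Finset.card_insert_of_notMem his, s.2]⟩
        (Set.mem_univ _)
      rw [homDeg_nonneg hd1, mem_homogeneousSubmodule] at hmem
      rw [ext0_eq ω (by rw [Finset.card_insert_of_notMem his, s.2])]
      have hx := (isHomogeneous_X ℂ i).mul hmem
      have harith : 1 + (k - (p + 1 : ℕ)).toNat = (k - p).toNat := by push_cast; omega
      rwa [harith] at hx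
    · rcases p with _ | q
      · intro t ht; omega
      · exact fun t ht => delta_delta ω t ht
  let Φ : ↥P →ₗ[ℂ] ↥(H0Omega n p k) :=
    LinearMap.codRestrict _ ((Delta n p).comp P.subtype) (fun x => hPmap x.1 x.2)
  -- surjectivity
  have hsurj : Function.Surjective Φ := by
    rintro ⟨ω, hω⟩
    rw [mem_H0Omega] at hω
    obtain ⟨hhom, hcl⟩ := hω
    set m := (k - p).toNat with hm
    have hom : ∀ s : Idx n p, (ω s).IsHomogeneous m := by
      intro s
      have := hhom s
      rwa [homDeg_nonneg (by omega), mem_homogeneousSubmodule] at this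
    have hm1 : 1 ≤ m := by omega
    have huP : ((k : ℂ)⁻¹ • Dform p ω) ∈ P := by
      rw [hP, Submodule.mem_pi]
      intro s _
      rw [homDeg_nonneg hd1]
      have hres : ((k : ℂ)⁻¹ • Dform p ω) s = (k : ℂ)⁻¹ • (Dform p ω s) := rfl
      rw [hres]
      refine Submodule.smul_mem _ _ (Submodule.sum_mem _ fun i hi => Submodule.smul_mem _ _ ?_)
      rw [mem_homogeneousSubmodule]
      rw [ext0_eq ω (by rw [Finset.card_erase_of_mem hi, s.2]; omega)]
      have hpd := pderiv_isHomogeneous (hom ⟨s.1.erase i, by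
        rw [Finset.card_erase_of_mem hi, s.2]; omega⟩) i
      have harith2 : m - 1 = (k - (p + 1 : ℕ)).toNat := by
        rw [hm]; push_cast; omega
      rwa [harith2] at hpd
    refine ⟨⟨(k : ℂ)⁻¹ • Dform p ω, huP⟩, ?_⟩
    · apply Subtype.ext
      show Delta n p ((k : ℂ)⁻¹ • Dform p ω) = ω
      rw [map_smul]
      have hDD : Delta n p (Dform p ω) = ((m : ℂ) + (p : ℂ)) • ω :=
        funext (fun s => delta_Dform ω hom hcl s)
      rw [hDD, smul_smul]
      have hcast : ((m : ℂ) + (p : ℂ)) = (k : ℂ) := by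
        have h1 : ((m : ℤ)) = k - p := Int.toNat_of_nonneg (by omega)
        have h2 := congrArg (Int.cast : ℤ → ℂ) h1
        push_cast at h2 ⊢
        linear_combination h2
      rw [hcast, inv_mul_cancel₀ (by rw [Int.cast_ne_zero]; omega), one_smul]
  -- kernel
  have hker : LinearMap.ker Φ = Submodule.comap P.subtype (H0Omega n (p + 1) k) := by
    ext x
    rw [LinearMap.mem_ker, Submodule.mem_comap]
    have hx : Φ x = 0 ↔ Delta n p x.1 = 0 := by
      constructor
      · intro h
        have := congrArg (Subtype.val) h
        exact this
      · intro h
        apply Subtype.ext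
        exact h
    rw [hx, mem_H0Omega]
    constructor
    · intro h
      refine ⟨fun s => x.2 s (Set.mem_univ s), fun t ht => ?_⟩
      have := congrFun h (⟨t, by omega⟩ : Idx n p)
      exact this
    · rintro ⟨-, hcl⟩
      funext s
      exact hcl s.1 (by rw [s.2])
  have hrank := LinearMap.finrank_range_add_finrank_ker Φ
  have hle : H0Omega n (p + 1) k ≤ P := inf_le_left
  have h1 : finrank ℂ ↥(LinearMap.range Φ) = finrank ℂ ↥(H0Omega n p k) := by
    rw [LinearMap.range_eq_top.mpr hsurj]
    exact finrank_top ℂ _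
  have h2 : finrank ℂ ↥(LinearMap.ker Φ) = finrank ℂ ↥(H0Omega n (p + 1) k) := by
    rw [hker]
    exact (Submodule.comapSubtypeEquivOfLe hle).finrank_eq
  rw [h1, h2] at hrank
  exact hrank.symm

end Bott
namespace Bott

lemma choose_id' (q b' r : ℕ) :
    (q+b'+r+3).choose (q+b'+2) * (q+b'+1).choose q + (q+b'+r+2).choose (q+b'+2) * (q+b'+1).choose (q+1)
      = (q+r+2).choose (q+1) * (q+b'+r+2).choose (q+r+1) := by
  have h0 : ∀ x : ℕ, (0:ℚ) < x.factorial := fun x => by exact_mod_cast x.factorial_pos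
  rw [← @Nat.cast_inj ℚ]
  push_cast
  rw [Nat.cast_choose ℚ (by omega : q+b'+2 ≤ q+b'+r+3),
      Nat.cast_choose ℚ (by omega : q ≤ q+b'+1),
      Nat.cast_choose ℚ (by omega : q+b'+2 ≤ q+b'+r+2),
      Nat.cast_choose ℚ (by omega : q+1 ≤ q+b'+1),
      Nat.cast_choose ℚ (by omega : q+1 ≤ q+r+2),
      Nat.cast_choose ℚ (by omega : q+r+1 ≤ q+b'+r+2)]
  rw [show q+b'+r+3 - (q+b'+2) = r+1 from by omega,
      show q+b'+1 - q = b'+1 from by omega,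
      show q+b'+r+2 - (q+b'+2) = r from by omega,
      show q+b'+1 - (q+1) = b' from by omega,
      show q+r+2 - (q+1) = r+1 from by omega,
      show q+b'+r+2 - (q+r+1) = b'+1 from by omega]
  rw [show q+b'+r+3 = (q+b'+r+2)+1 from by omega, Nat.factorial_succ (q+b'+r+2),
      show q+b'+2 = (q+b'+1)+1 from by omega, Nat.factorial_succ (q+b'+1),
      Nat.factorial_succ r, Nat.factorial_succ b', Nat.factorial_succ q,
      show q+r+2 = (q+r+1)+1 from by omega, Nat.factorial_succ (q+r+1)]
  have hqbr : ((q+b'+r+2).factorial : ℚ) ≠ 0 := ne_of_gt (h0 _)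
  have hqb : ((q+b'+1).factorial : ℚ) ≠ 0 := ne_of_gt (h0 _)
  have hq : ((q).factorial : ℚ) ≠ 0 := ne_of_gt (h0 _)
  have hr : ((r).factorial : ℚ) ≠ 0 := ne_of_gt (h0 _)
  have hb : ((b').factorial : ℚ) ≠ 0 := ne_of_gt (h0 _)
  have hqr : ((q+r+1).factorial : ℚ) ≠ 0 := ne_of_gt (h0 _)
  push_cast
  field_simp
  ring

lemma choose_id (q b r : ℕ) :
    (q+b+r+2).choose (q+1+b) * (q+b).choose q + (q+b+r+1).choose (q+1+b) * (q+b).choose (q+1)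
      = (q+r+2).choose (q+1) * (q+b+r+1).choose (q+r+1) := by
  rcases b with _ | b'
  · simp only [show q+0+r+2 = q+r+2 from by omega, show q+1+0 = q+1 from by omega,
      show q+0 = q from rfl, show q+0+r+1 = q+r+1 from by omega]
    rw [Nat.choose_self, Nat.choose_succ_self, Nat.choose_self]
    ring
  · simp only [show q+(b'+1) = q+b'+1 from by omega, show q+1+(b'+1) = q+b'+2 from by omega]
    rw [show q+b'+1+r+2 = q+b'+r+3 from by omega, show q+b'+1+r+1 = q+b'+r+2 from by omega]
    exact choose_id' q b' r

end Bott

open Bott in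
/-- Bott's formula for `h⁰(ℙⁿ, Ω^p(k))`. -/
theorem stmt_4 (n p : ℕ) (k : ℤ) (hn : 1 ≤ n) (hp : p ≤ n) :
    ((p : ℤ) < k →
      Module.finrank ℂ (H0Omega n p k) =
        Nat.choose (k + n - p).toNat k.toNat * Nat.choose (k - 1).toNat p) ∧
    (k ≤ (p : ℤ) → ¬(k = 0 ∧ p = 0) → H0Omega n p k = ⊥) := by
  constructor
  · intro hpk
    have hk1 : 1 ≤ k := by omega
    have main : ∀ d q, q + d = n + 1 →
        Module.finrank ℂ (H0Omega n q k) =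
          Nat.choose (k + n - q).toNat k.toNat * Nat.choose (k - 1).toNat q := by
      intro d
      induction d with
      | zero =>
        intro q hq
        have hq' : q = n + 1 := by omega
        subst hq'
        have hbot : H0Omega n (n + 1) k = ⊥ := by
          rcases le_or_gt k ((n : ℤ) + 1) with h | h
          · exact H0_eq_bot (by push_cast; omega) (fun h' => absurd h'.1 (by omega))
          · exact H0_top_eq_bot h
        rw [hbot, finrank_bot]
        rw [Nat.choose_eq_zero_of_lt (by omega : (k + n - ((n+1 : ℕ) : ℤ)).toNat < k.toNat),
          zero_mul]
      | succ d ih =>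
        intro q hq
        have hqn : q ≤ n := by omega
        rcases le_or_gt k (q : ℤ) with hkq | hqk
        · rw [H0_eq_bot hkq (fun h' => absurd h'.1 (by omega)), finrank_bot]
          rw [Nat.choose_eq_zero_of_lt (by omega : (k - 1).toNat < q), mul_zero]
        · have hrec := rank_rec (n := n) (p := q) (k := k) hqk
          have hIH := ih (q + 1) (by omega)
          have hPval := finrank_P n (q + 1) (k - ((q + 1 : ℕ) : ℤ)) (by push_cast; omega)
          set a := k.toNat with ha
          have e1 : (k + n - (q : ℤ)).toNat = a + n - q := by omega
          have e2 : (k - 1).toNat = a - 1 := by omega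
          have e3 : (k + n - ((q + 1 : ℕ) : ℤ)).toNat = a + n - (q + 1) := by push_cast; omega
          have e4 : (k - ((q + 1 : ℕ) : ℤ)).toNat = a - (q + 1) := by push_cast; omega
          have hid : (a+n-q).choose a * (a-1).choose q
              + (a+n-(q+1)).choose a * (a-1).choose (q+1)
              = (n+1).choose (q+1) * ((a-(q+1)) + n).choose n := by
            rcases Nat.lt_or_ge q n with hlt | hge
            · have hb := choose_id q (a-1-q) (n-1-q)
              rw [show q+(a-1-q)+(n-1-q)+2 = a+n-q from by omega,
                  show q+(a-1-q)+(n-1-q)+1 = a+n-(q+1) from by omega,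
                  show q+(n-1-q)+2 = n+1 from by omega,
                  show q+(n-1-q)+1 = n from by omega,
                  show q+1+(a-1-q) = a from by omega,
                  show q+(a-1-q) = a-1 from by omega] at hb
              rw [show (a-(q+1)) + n = a+n-(q+1) from by omega]
              exact hb
            · rw [show a+n-q = a from by omega, Nat.choose_self, one_mul,
                  show a+n-(q+1) = a-1 from by omega,
                  Nat.choose_eq_zero_of_lt (by omega : a-1 < a), zero_mul, add_zero,
                  show a-(q+1)+n = a-1 from by omega,
                  show n+1 = q+1 from by omega, Nat.choose_self, one_mul,
                  show n = q from by omega]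
          rw [e1, e2]
          rw [e3, e2] at hIH
          rw [e4] at hPval
          linarith [hrec, hIH, hPval, hid]
    exact main (n + 1 - p) p (by omega)
  · intro hk hne
    exact H0_eq_bot hk hne
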